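/- Let G be a bipartite graph with bipartition (X,Y), and let C be an even cycle in G of length 2m ≥ 6. Suppose u' ∈ X and u'' ∈ Y are vertices not on C with d(u', C) + d(u'', C) ≥ 2m − 1. Then there exists a vertex v on C adjacent to u' such that the graph induced on (V(C) ∪ {u''}) \ {v} contains a cycle of length 2m. -/

import Mathlib

namespace SimpleGraph.Walk

variable {V : Type*} {G : SimpleGraph V}

lemma map_getVert_range_cons {u v w : V} (h : G.Adj u v) (q : G.Walk v w) (k : ℕ) :
    (List.range (k+1)).map (Walk.cons h q).getVert = u :: (List.range k).map q.getVert := by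
  rw [List.range_succ_eq_map]
  simp [List.map_map, Function.comp_def, Walk.getVert_cons_succ]

lemma support_eq_map_getVert {u v : V} (p : G.Walk u v) :
    p.support = (List.range (p.length + 1)).map p.getVert := by
  induction p with
  | nil => simp [Walk.getVert]
  | cons h q ih => rw [support_cons, length_cons, map_getVert_range_cons, ih]

/-- Take the first `n` darts of a walk. -/
def myTake : {u v : V} → (p : G.Walk u v) → (n : ℕ) → G.Walk u (p.getVert n)
  | _, _, p, 0 => Walk.nil.copy rfl (p.getVert_zero).symm
  | _, _, .nil, (n+1) => Walk.nil.copy rfl (by simp [Walk.getVert])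
  | _, _, .cons h q, (n+1) => (Walk.cons h (q.myTake n)).copy rfl (by
      rw [Walk.getVert_cons_succ])

/-- Drop the first `n` darts of a walk. -/
def myDrop : {u v : V} → (p : G.Walk u v) → (n : ℕ) → G.Walk (p.getVert n) v
  | _, _, p, 0 => p.copy (p.getVert_zero).symm rfl
  | _, _, .nil, (n+1) => Walk.nil.copy (by simp [Walk.getVert]) rfl
  | _, _, .cons h q, (n+1) => (q.myDrop n).copy (by rw [Walk.getVert_cons_succ]) rfl

lemma length_myTake {u v : V} (p : G.Walk u v) (n : ℕ) (hn : n ≤ p.length) :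
    (p.myTake n).length = n := by
  induction p generalizing n with
  | nil => simp at hn; subst hn; simp [myTake]
  | cons h q ih =>
    cases n with
    | zero => simp [myTake]
    | succ n => simp only [myTake, length_copy, length_cons]
                rw [ih]; simpa using hn

lemma length_myDrop {u v : V} (p : G.Walk u v) (n : ℕ) :
    (p.myDrop n).length = p.length - n := by
  induction p generalizing n with
  | nil => cases n <;> simp [myDrop]
  | cons h q ih =>
    cases n with
    | zero => simp [myDrop]
    | succ n => simp only [myDrop, length_copy, length_cons]
                rw [ih]; omega

lemma support_myTake {u v : V} (p : G.Walk u v) (n : ℕ) (hn : n ≤ p.length) :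
    (p.myTake n).support = (List.range (n+1)).map p.getVert := by
  induction p generalizing n with
  | nil => simp at hn; subst hn; simp [myTake, Walk.getVert]
  | cons h q ih =>
    cases n with
    | zero => simp [myTake, List.range_succ]
    | succ n =>
      simp only [myTake, support_copy, support_cons]
      rw [ih n (by simpa using hn), map_getVert_range_cons]

lemma support_myDrop {u v : V} (p : G.Walk u v) (n : ℕ) (hn : n ≤ p.length) :
    (p.myDrop n).support = (List.range (p.length - n + 1)).map (fun j => p.getVert (n + j)) := by
  induction p generalizing n with
  | nil => simp at hn; subst hn; simp [myDrop, Walk.getVert]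
  | cons h q ih =>
    cases n with
    | zero =>
      simp only [myDrop, support_copy, Nat.zero_add, Nat.sub_zero, zero_add]
      exact support_eq_map_getVert _
    | succ n =>
      simp only [myDrop, support_copy, length_cons]
      rw [ih n (by simpa using hn)]
      rw [show q.length - n = q.length + 1 - (n+1) by omega]
      apply List.map_congr_left
      intro j _
      rw [show n + 1 + j = (n + j) + 1 by omega, Walk.getVert_cons_succ]

lemma support_tail_eq_map {u v : V} (p : G.Walk u v) :
    p.support.tail = (List.range p.length).map (fun k => p.getVert (k+1)) := by
  rw [support_eq_map_getVert, List.range_succ_eq_map]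
  simp [List.map_map, Function.comp_def]

lemma self_mem_support_tail {u : V} (p : G.Walk u u) (hp : 0 < p.length) :
    u ∈ p.support.tail := by
  rw [support_tail_eq_map]
  refine List.mem_map.mpr ⟨p.length - 1, List.mem_range.mpr (by omega), ?_⟩
  rw [show p.length - 1 + 1 = p.length by omega]
  exact p.getVert_length

lemma mem_support_iff_mem_tail {u : V} (p : G.Walk u u) (hp : 0 < p.length) (x : V) :
    x ∈ p.support ↔ x ∈ p.support.tail := by
  constructor
  · intro hx
    rw [support_eq_cons] at hx
    rcases List.mem_cons.mp hx with rfl | h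
    · exact self_mem_support_tail p hp
    · exact h
  · intro hx
    rw [support_eq_cons]
    exact List.mem_cons_of_mem _ hx

end SimpleGraph.Walk

open SimpleGraph Walk

theorem aux_swap {V : Type*} [DecidableEq V]
    (G : SimpleGraph V) [DecidableRel G.Adj]
    (X Y : Finset V) (hdisj : Disjoint X Y) (hcover : ∀ w : V, w ∈ X ∨ w ∈ Y)
    (hbip : ∀ a b, G.Adj a b → (a ∈ X ∧ b ∈ Y) ∨ (a ∈ Y ∧ b ∈ X))
    (m : ℕ) (hm : 3 ≤ m)
    (v₀ : V) (c : G.Walk v₀ v₀) (hc : c.IsCycle) (hlen : c.length = 2 * m)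
    (u' u'' : V) (hu' : u' ∉ c.support) (hu'' : u'' ∉ c.support)
    (hu'X : u' ∈ X) (hu''Y : u'' ∈ Y) (hv₀X : v₀ ∈ X)
    (hnbr : 2 * m - 1 ≤ (c.support.toFinset.filter (fun w => G.Adj u' w)).card
      + (c.support.toFinset.filter (fun w => G.Adj u'' w)).card) :
    ∃ v ∈ c.support, G.Adj u' v ∧
      ∃ (w : V) (d : G.Walk w w), d.IsCycle ∧ d.length = 2 * m ∧
        ∀ x ∈ d.support, (x ∈ c.support ∨ x = u'') ∧ x ≠ v := by
  have hXY : ∀ x : V, x ∈ X ↔ x ∉ Y := fun x =>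
    ⟨fun h h' => Finset.disjoint_left.mp hdisj h h', fun h => (hcover x).resolve_right h⟩
  -- parity of positions
  have parity : ∀ i, i ≤ 2*m → (c.getVert i ∈ X ↔ Even i) := by
    intro i
    induction i with
    | zero => intro _; simpa using hv₀X
    | succ i ih =>
      intro hi
      have hadj := c.adj_getVert_succ (i := i) (by omega)
      have hb := hbip _ _ hadj
      have hi' := ih (by omega)
      rw [Nat.even_add_one, ← hi']
      rcases hb with ⟨h1, h2⟩ | ⟨h1, h2⟩
      · have hnx : c.getVert (i+1) ∉ X := fun h => Finset.disjoint_left.mp hdisj h h2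
        simp [hnx, h1]
      · have h2' : c.getVert i ∉ X := fun h => Finset.disjoint_left.mp hdisj h h1
        simp [h2, h2']
  -- injectivity of getVert on [1, 2m]
  have hnodup := hc.2
  have htail : c.support.tail = (List.range (2*m)).map (fun k => c.getVert (k+1)) := by
    rw [support_eq_map_getVert, hlen, List.range_succ_eq_map]
    simp [List.map_map, Function.comp_def]
  have inj : ∀ i j, 1 ≤ i → i ≤ 2*m → 1 ≤ j → j ≤ 2*m →
      c.getVert i = c.getVert j → i = j := by
    intro i j hi1 hi2 hj1 hj2 hij
    rw [htail] at hnodup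
    have := List.inj_on_of_nodup_map hnodup (x := i - 1) (y := j - 1)
      (by simp; omega) (by simp; omega)
    have h' : c.getVert (i - 1 + 1) = c.getVert (j - 1 + 1) := by
      rw [show i - 1 + 1 = i by omega, show j - 1 + 1 = j by omega]; exact hij
    have := this h'
    omega
  have hgv2m : c.getVert (2*m) = v₀ := by rw [← hlen]; exact c.getVert_length
  have hmemsup : ∀ x, x ∈ c.support ↔ ∃ k, k < 2*m ∧ c.getVert k = x := by
    intro x
    rw [support_eq_map_getVert, hlen]
    simp only [List.mem_map, List.mem_range]
    constructor
    · rintro ⟨k, hk, rfl⟩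
      rcases Nat.lt_or_ge k (2*m) with h | h
      · exact ⟨k, h, rfl⟩
      · have : k = 2*m := by omega
        subst this
        exact ⟨0, by omega, by rw [c.getVert_zero, hgv2m]⟩
    · rintro ⟨k, hk, rfl⟩; exact ⟨k, by omega, rfl⟩
  have injOn0 : ∀ i j, i < 2*m → j < 2*m → c.getVert i = c.getVert j → i = j := by
    intro i j hi hj hij
    rcases Nat.eq_zero_or_pos i with rfl | hi1
    · rcases Nat.eq_zero_or_pos j with rfl | hj1
      · rfl
      · exfalso
        have hh : c.getVert (2*m) = c.getVert j := by
          calc c.getVert (2*m) = v₀ := hgv2m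
          _ = c.getVert 0 := (c.getVert_zero).symm
          _ = c.getVert j := hij
        have := inj (2*m) j (by omega) le_rfl (by omega) (by omega) hh
        omega
    · rcases Nat.eq_zero_or_pos j with rfl | hj1
      · exfalso
        have hh : c.getVert i = c.getVert (2*m) := by
          calc c.getVert i = c.getVert 0 := hij
          _ = v₀ := c.getVert_zero
          _ = c.getVert (2*m) := hgv2m.symm
        have := inj i (2*m) (by omega) (by omega) (by omega) le_rfl hh
        omega
      · exact inj i j (by omega) (by omega) (by omega) (by omega) hij
  -- index sets
  set A := (Finset.range (2*m)).filter (fun i => G.Adj u' (c.getVert i)) with hA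
  set B := (Finset.range (2*m)).filter (fun i => G.Adj u'' (c.getVert i)) with hB
  set Ev := (Finset.range (2*m)).filter (fun i => Even i) with hEv
  set Od := (Finset.range (2*m)).filter (fun i => ¬ Even i) with hOd
  have cardEv : Ev.card = m := by
    have : Ev = (Finset.range m).image (fun k => 2*k) := by
      ext j
      simp only [hEv, Finset.mem_filter, Finset.mem_range, Finset.mem_image]
      constructor
      · rintro ⟨hj, k, hk⟩; exact ⟨k, by omega, by omega⟩
      · rintro ⟨k, hk, rfl⟩; exact ⟨by omega, ⟨k, by omega⟩⟩
    rw [this, Finset.card_image_of_injective _ (fun a b h => by omega), Finset.card_range]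
  have cardOd : Od.card = m := by
    have : Od = (Finset.range m).image (fun k => 2*k+1) := by
      ext j
      simp only [hOd, Finset.mem_filter, Finset.mem_range, Finset.mem_image, Nat.not_even_iff_odd]
      constructor
      · rintro ⟨hj, k, hk⟩; exact ⟨k, by omega, by omega⟩
      · rintro ⟨k, hk, rfl⟩; exact ⟨by omega, ⟨k, by omega⟩⟩
    rw [this, Finset.card_image_of_injective _ (fun a b h => by omega), Finset.card_range]
  have hAsub : A ⊆ Od := by
    intro i hi
    simp only [hA, Finset.mem_filter, Finset.mem_range] at hi
    obtain ⟨hi2m, hadj⟩ := hi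
    have hb := hbip _ _ hadj
    have hY : c.getVert i ∈ Y := by
      rcases hb with ⟨_, h2⟩ | ⟨h1, _⟩
      · exact h2
      · exact (Finset.disjoint_left.mp hdisj hu'X h1).elim
    have : ¬ Even i := fun he => (hXY _).mp ((parity i (by omega)).mpr he) hY
    exact Finset.mem_filter.mpr ⟨Finset.mem_range.mpr hi2m, this⟩
  have hBsub : B ⊆ Ev := by
    intro i hi
    simp only [hB, Finset.mem_filter, Finset.mem_range] at hi
    obtain ⟨hi2m, hadj⟩ := hi
    have hX : c.getVert i ∈ X := by
      rcases hbip _ _ hadj with ⟨h1, _⟩ | ⟨_, h2⟩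
      · exact (Finset.disjoint_left.mp hdisj h1 hu''Y).elim
      · exact h2
    have : Even i := (parity i (by omega)).mp hX
    exact Finset.mem_filter.mpr ⟨Finset.mem_range.mpr hi2m, this⟩
  -- card translation
  have himg : ∀ (z : V), (c.support.toFinset.filter (fun w => G.Adj z w)) =
      ((Finset.range (2*m)).filter (fun i => G.Adj z (c.getVert i))).image c.getVert := by
    intro z
    ext w
    simp only [Finset.mem_filter, Finset.mem_image, List.mem_toFinset, Finset.mem_range]
    constructor
    · rintro ⟨hw, hadj⟩
      obtain ⟨k, hk, rfl⟩ := (hmemsup w).mp hw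
      exact ⟨k, ⟨hk, hadj⟩, rfl⟩
    · rintro ⟨k, ⟨hk, hadj⟩, rfl⟩
      exact ⟨(hmemsup _).mpr ⟨k, hk, rfl⟩, hadj⟩
  have cardtr : ∀ (z : V), (c.support.toFinset.filter (fun w => G.Adj z w)).card =
      ((Finset.range (2*m)).filter (fun i => G.Adj z (c.getVert i))).card := by
    intro z
    rw [himg z]
    apply Finset.card_image_of_injOn
    intro a ha b hb hab
    simp only [Finset.coe_filter, Set.mem_setOf_eq, Finset.mem_range] at ha hb
    exact injOn0 a b ha.1 hb.1 hab
  have cardsum : 2*m - 1 ≤ A.card + B.card := by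
    rw [hA, hB]
    calc 2*m-1 ≤ _ := hnbr
    _ = _ := by rw [cardtr u', cardtr u'']
  have cardAle : A.card ≤ m := cardOd ▸ Finset.card_le_card hAsub
  have cardBle : B.card ≤ m := cardEv ▸ Finset.card_le_card hBsub
  -- select a good index i
  obtain ⟨i, hiA, hiB1, hiB2⟩ :
      ∃ i ∈ A, (i-1) ∈ B ∧ (if i = 2*m-1 then 0 else i+1) ∈ B := by
    by_cases hBfull : Ev ⊆ B
    · have hBeq : B = Ev := Finset.Subset.antisymm hBsub hBfull
      have hpos : 0 < A.card := by omega
      obtain ⟨i, hiA⟩ := Finset.card_pos.mp hpos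
      have hio := hAsub hiA
      simp only [hOd, Finset.mem_filter, Finset.mem_range, Nat.not_even_iff_odd,
        Nat.odd_iff] at hio
      obtain ⟨hi2m, hodd⟩ := hio
      refine ⟨i, hiA, ?_, ?_⟩
      · rw [hBeq]
        simp only [hEv, Finset.mem_filter, Finset.mem_range, Nat.even_iff]
        omega
      · split_ifs with h
        · rw [hBeq]
          simp only [hEv, Finset.mem_filter, Finset.mem_range, Nat.even_iff]
          exact ⟨by omega, trivial⟩
        · rw [hBeq]
          simp only [hEv, Finset.mem_filter, Finset.mem_range, Nat.even_iff]
          omega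
    · obtain ⟨k, hkEv, hkB⟩ : ∃ k ∈ Ev, k ∉ B := by
        by_contra h
        push_neg at h
        exact hBfull h
      have hkEv' := hkEv
      simp only [hEv, Finset.mem_filter, Finset.mem_range, Nat.even_iff] at hkEv'
      obtain ⟨hk2m, hkeven⟩ := hkEv'
      have hBcard : B.card ≤ m - 1 := by
        have hsub : B ⊆ Ev.erase k :=
          fun j hj => Finset.mem_erase.mpr ⟨fun e => hkB (e ▸ hj), hBsub hj⟩
        calc B.card ≤ (Ev.erase k).card := Finset.card_le_card hsub
        _ = m - 1 := by rw [Finset.card_erase_of_mem hkEv, cardEv]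
      have hAeq : A = Od := Finset.eq_of_subset_of_card_le hAsub (by omega)
      have hBmem : ∀ j ∈ Ev, j ≠ k → j ∈ B := by
        intro j hjEv hjk
        by_contra hjB
        have hsub : B ⊆ (Ev.erase k).erase j := fun l hl => Finset.mem_erase.mpr
          ⟨fun e => hjB (e ▸ hl), Finset.mem_erase.mpr ⟨fun e => hkB (e ▸ hl), hBsub hl⟩⟩
        have hc2 : B.card ≤ m - 2 := by
          calc B.card ≤ ((Ev.erase k).erase j).card := Finset.card_le_card hsub
          _ = m - 2 := by
            rw [Finset.card_erase_of_mem (Finset.mem_erase.mpr ⟨hjk, hjEv⟩),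
              Finset.card_erase_of_mem hkEv, cardEv]
            omega
        omega
      have hne : (Od \ {k+1, (if k = 0 then 2*m - 1 else k - 1)}).Nonempty := by
        rw [← Finset.card_pos]
        have h1 := Finset.le_card_sdiff ({k+1, (if k = 0 then 2*m - 1 else k - 1)} : Finset ℕ) Od
        have hc : ({k+1, (if k = 0 then 2*m - 1 else k - 1)} : Finset ℕ).card ≤ 2 :=
          (Finset.card_insert_le _ _).trans (by simp)
        omega
      obtain ⟨i, hi⟩ := hne
      rw [Finset.mem_sdiff] at hi
      obtain ⟨hiOd, hinot⟩ := hi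
      simp only [Finset.mem_insert, Finset.mem_singleton, not_or] at hinot
      obtain ⟨hik1, hib2⟩ := hinot
      have hiA : i ∈ A := hAeq ▸ hiOd
      simp only [hOd, Finset.mem_filter, Finset.mem_range, Nat.not_even_iff_odd,
        Nat.odd_iff] at hiOd
      obtain ⟨hi2m, hiodd⟩ := hiOd
      refine ⟨i, hiA, ?_, ?_⟩
      · apply hBmem
        · simp only [hEv, Finset.mem_filter, Finset.mem_range, Nat.even_iff]; omega
        · omega
      · split_ifs with h
        · apply hBmem
          · simp only [hEv, Finset.mem_filter, Finset.mem_range, Nat.even_iff]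
            exact ⟨by omega, trivial⟩
          · intro e
            apply hib2
            rw [if_pos e.symm]
            omega
        · apply hBmem
          · simp only [hEv, Finset.mem_filter, Finset.mem_range, Nat.even_iff]; omega
          · intro e
            apply hib2
            rw [if_neg (by omega : ¬ k = 0)]
            omega
  -- facts about i
  have hio := hAsub hiA
  simp only [hOd, Finset.mem_filter, Finset.mem_range, Nat.not_even_iff_odd,
    Nat.odd_iff] at hio
  obtain ⟨hi2m, hiodd⟩ := hio
  have hadjA : G.Adj u' (c.getVert i) := by
    rw [hA] at hiA
    exact (Finset.mem_filter.mp hiA).2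
  have hadjB1 : G.Adj u'' (c.getVert (i-1)) := by
    rw [hB] at hiB1
    exact (Finset.mem_filter.mp hiB1).2
  have hadjB2 : G.Adj u'' (c.getVert (i+1)) := by
    by_cases h : i = 2*m - 1
    · rw [if_pos h, hB] at hiB2
      have h0 := (Finset.mem_filter.mp hiB2).2
      have e : c.getVert (i+1) = c.getVert 0 := by
        calc c.getVert (i+1) = c.getVert (2*m) := by rw [show i+1 = 2*m by omega]
        _ = v₀ := hgv2m
        _ = c.getVert 0 := (c.getVert_zero).symm
      rw [e]
      exact h0
    · rw [if_neg h, hB] at hiB2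
      exact (Finset.mem_filter.mp hiB2).2
  have hmem_c : ∀ k, k ≤ 2*m → c.getVert k ∈ c.support := by
    intro k hk
    rcases Nat.lt_or_ge k (2*m) with h | h
    · exact (hmemsup _).mpr ⟨k, h, rfl⟩
    · have hk' : k = 2*m := by omega
      refine (hmemsup _).mpr ⟨0, by omega, ?_⟩
      rw [c.getVert_zero, hk', hgv2m]
  -- the new walk
  have hle1 : i + 1 ≤ c.length := by omega
  have hle2 : i - 1 ≤ c.length := by omega
  set E : G.Walk (c.getVert (i+1)) (c.getVert (i-1)) :=
    (c.myDrop (i+1)).append (c.myTake (i-1)) with hE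
  have hesup : E.support = ((List.range (2*m - (i+1) + 1)).map (fun j => c.getVert (i+1+j)))
      ++ ((List.range (i-1)).map (fun j => c.getVert (j+1))) := by
    rw [hE, support_append, support_myDrop _ _ hle1, support_myTake _ _ hle2, hlen]
    congr 1
    rw [List.range_succ_eq_map, List.map_cons, List.tail_cons, List.map_map]
    rfl
  have hmem_E : ∀ x ∈ E.support, ∃ k, 1 ≤ k ∧ k ≤ 2*m ∧ k ≠ i ∧ x = c.getVert k := by
    intro x hx
    rw [hesup] at hx
    rcases List.mem_append.mp hx with h | h
    · obtain ⟨j, hj, rfl⟩ := List.mem_map.mp h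
      rw [List.mem_range] at hj
      exact ⟨i+1+j, by omega, by omega, by omega, rfl⟩
    · obtain ⟨j, hj, rfl⟩ := List.mem_map.mp h
      rw [List.mem_range] at hj
      exact ⟨j+1, by omega, by omega, by omega, rfl⟩
  have hnodupE : E.support.Nodup := by
    rw [hesup, List.nodup_append]
    refine ⟨?_, ?_, ?_⟩
    · apply List.Nodup.map_on _ List.nodup_range
      intro x hx y hy hxy
      rw [List.mem_range] at hx hy
      have := inj (i+1+x) (i+1+y) (by omega) (by omega) (by omega) (by omega) hxy
      omega
    · apply List.Nodup.map_on _ List.nodup_range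
      intro x hx y hy hxy
      rw [List.mem_range] at hx hy
      have := inj (x+1) (y+1) (by omega) (by omega) (by omega) (by omega) hxy
      omega
    · intro x hx y hx' hxy
      subst hxy
      obtain ⟨j1, hj1, rfl⟩ := List.mem_map.mp hx
      obtain ⟨j2, hj2, hx2⟩ := List.mem_map.mp hx'
      rw [List.mem_range] at hj1 hj2
      have := inj (j2+1) (i+1+j1) (by omega) (by omega) (by omega) (by omega) hx2
      omega
  have hu''E : u'' ∉ E.support := by
    intro hx
    obtain ⟨k, h1, h2, _, rfl⟩ := hmem_E _ hx
    exact hu'' (hmem_c k h2)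
  refine ⟨c.getVert i, hmem_c i (by omega), hadjA,
    u'', Walk.cons hadjB2 (E.concat hadjB1.symm), ?_, ?_, ?_⟩
  · rw [Walk.cons_isCycle_iff]
    constructor
    · apply Walk.IsPath.mk'
      rw [Walk.support_concat, List.nodup_append]
      refine ⟨hnodupE, List.nodup_singleton _, ?_⟩
      intro x hx y hx' hxy
      subst hxy
      rw [List.mem_singleton] at hx'
      subst hx'
      exact hu''E hx
    · intro hmem
      rw [Walk.edges_concat, List.concat_eq_append, List.mem_append] at hmem
      rcases hmem with h | h
      · exact hu''E (E.fst_mem_support_of_mem_edges h)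
      · rw [List.mem_singleton, Sym2.eq_iff] at h
        rcases h with ⟨h1, h2⟩ | ⟨h1, h2⟩
        · exact hu'' (h1 ▸ hmem_c (i-1) (by omega))
        · rcases Nat.lt_or_ge 1 i with hgt | hle
          · have := inj (i+1) (i-1) (by omega) (by omega) (by omega) (by omega) h2
            omega
          · have hi1 : i = 1 := by omega
            have hh : c.getVert 2 = c.getVert (2*m) := by
              calc c.getVert 2 = c.getVert (i+1) := by rw [hi1]
              _ = c.getVert (i-1) := h2
              _ = c.getVert 0 := by rw [hi1]
              _ = v₀ := c.getVert_zero
              _ = c.getVert (2*m) := hgv2m.symm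
            have := inj 2 (2*m) (by omega) (by omega) (by omega) le_rfl hh
            omega
  · rw [Walk.length_cons, Walk.length_concat, hE, Walk.length_append,
      length_myDrop, length_myTake _ _ hle2, hlen]
    omega
  · intro x hx
    rw [Walk.support_cons, List.mem_cons, Walk.support_concat,
      List.mem_append, List.mem_singleton] at hx
    have hne_u'' : u'' ≠ c.getVert i := fun h => hu'' (h ▸ hmem_c i (by omega))
    rcases hx with rfl | hx | rfl
    · exact ⟨Or.inr rfl, hne_u''⟩
    · obtain ⟨k, h1, h2, h3, rfl⟩ := hmem_E _ hx
      refine ⟨Or.inl (hmem_c k h2), fun h => ?_⟩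
      have := inj k i (by omega) (by omega) (by omega) (by omega) h
      omega
    · exact ⟨Or.inr rfl, hne_u''⟩



/-- Let G be bipartite with bipartition (X,Y) and C an even cycle of
length 2m ≥ 6. If u' ∈ X and u'' ∈ Y are off C with d(u',C) + d(u'',C) ≥ 2m − 1,
then there is a vertex v on C adjacent to u' such that the graph induced on
(V(C) ∪ {u''}) \ {v} contains a cycle of length 2m. -/
theorem swap_vertex_into_cycle {V : Type*} [DecidableEq V]
    (G : SimpleGraph V) [DecidableRel G.Adj]
    (X Y : Finset V) (hdisj : Disjoint X Y) (hcover : ∀ w : V, w ∈ X ∨ w ∈ Y)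
    (hbip : ∀ a b, G.Adj a b → (a ∈ X ∧ b ∈ Y) ∨ (a ∈ Y ∧ b ∈ X))
    (m : ℕ) (hm : 3 ≤ m)
    (v₀ : V) (c : G.Walk v₀ v₀) (hc : c.IsCycle) (hlen : c.length = 2 * m)
    (u' u'' : V) (hu' : u' ∉ c.support) (hu'' : u'' ∉ c.support)
    (hu'X : u' ∈ X) (hu''Y : u'' ∈ Y)
    (hnbr : 2 * m - 1 ≤ (c.support.toFinset.filter (fun w => G.Adj u' w)).card
      + (c.support.toFinset.filter (fun w => G.Adj u'' w)).card) :
    ∃ v ∈ c.support, G.Adj u' v ∧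
      ∃ (w : V) (d : G.Walk w w), d.IsCycle ∧ d.length = 2 * m ∧
        ∀ x ∈ d.support, (x ∈ c.support ∨ x = u'') ∧ x ≠ v := by
  rcases hcover v₀ with hv₀X | hv₀Y
  · exact aux_swap G X Y hdisj hcover hbip m hm v₀ c hc hlen u' u'' hu' hu'' hu'X hu''Y hv₀X hnbr
  · have hlpos : 0 < c.length := by omega
    have h1 : c.getVert 1 ∈ c.support := by
      rw [support_eq_map_getVert]
      exact List.mem_map.mpr ⟨1, List.mem_range.mpr (by omega), rfl⟩
    set c' := c.rotate _ h1 with hc'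
    have hcyc' : c'.IsCycle := hc.rotate h1
    have hlen' : c'.length = 2*m := by rw [hc', length_rotate, hlen]
    have hlpos' : 0 < c'.length := by omega
    have hmemiff : ∀ x, x ∈ c'.support ↔ x ∈ c.support := by
      intro x
      rw [mem_support_iff_mem_tail c' hlpos' x, mem_support_iff_mem_tail c hlpos x]
      exact (support_rotate c _ h1).perm.mem_iff
    have hfin : c'.support.toFinset = c.support.toFinset := by
      ext x
      simp only [List.mem_toFinset]
      exact hmemiff x
    have hgv1X : c.getVert 1 ∈ X := by
      have hadj := c.adj_getVert_succ (i := 0) hlpos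
      rw [c.getVert_zero] at hadj
      rcases hbip _ _ hadj with ⟨hx, _⟩ | ⟨_, hx⟩
      · exact (Finset.disjoint_left.mp hdisj hx hv₀Y).elim
      · exact hx
    have hnbr' : 2 * m - 1 ≤ (c'.support.toFinset.filter (fun w => G.Adj u' w)).card
        + (c'.support.toFinset.filter (fun w => G.Adj u'' w)).card := by
      rw [hfin]
      exact hnbr
    obtain ⟨v, hv, hadj, w, d, hd1, hd2, hd3⟩ :=
      aux_swap G X Y hdisj hcover hbip m hm _ c' hcyc' hlen' u' u''
        (fun h => hu' ((hmemiff u').mp h)) (fun h => hu'' ((hmemiff u'').mp h))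
        hu'X hu''Y hgv1X hnbr'
    refine ⟨v, (hmemiff v).mp hv, hadj, w, d, hd1, hd2, fun x hx => ?_⟩
    obtain ⟨ha, hb⟩ := hd3 x hx
    exact ⟨ha.imp (fun h => (hmemiff x).mp h) id, hb⟩
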